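/- Let q be a real constant and let f be a C² real function on an open interval I ⊆ (0,∞). Then f satisfies (r(8r + 2f'(r)f''(r)) − 4(4r² + f'(r)²))/(4r² + f'(r)²)^{3/2} = q for all r ∈ I (i.e., the surface of revolution t = f(√(x²+y²)) in the Heisenberg group has constant symplectic distortion q on I) if and only if there exists a constant c ∈ ℝ such that r²/√(4r² + f'(r)²) = c − q r²/4 for all r ∈ I. -/

import Mathlib

theorem key_deriv (q a b : ℝ) (ha : 0 ≤ a) (f : ℝ → ℝ)
    (hf : ContDiffOn ℝ 2 f (Set.Ioo a b)) (r : ℝ) (hr : r ∈ Set.Ioo a b) :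
    HasDerivAt (fun x => x ^ 2 / Real.sqrt (4 * x ^ 2 + (deriv f x) ^ 2) + q * x ^ 2 / 4)
      (q * r / 2 - (r / 2) *
        ((r * (8 * r + 2 * deriv f r * deriv (deriv f) r) -
            4 * (4 * r ^ 2 + (deriv f r) ^ 2)) /
          (4 * r ^ 2 + (deriv f r) ^ 2) ^ ((3 : ℝ) / 2))) r := by
  have hr0 : 0 < r := lt_of_le_of_lt ha hr.1
  have h1 : ContDiffOn ℝ 1 (deriv f) (Set.Ioo a b) :=
    hf.deriv_of_isOpen isOpen_Ioo (by norm_num)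
  have h2 : DifferentiableAt ℝ (deriv f) r :=
    ((h1.differentiableOn one_ne_zero) r hr).differentiableAt (isOpen_Ioo.mem_nhds hr)
  have hu : HasDerivAt (deriv f) (deriv (deriv f) r) r := h2.hasDerivAt
  set u := deriv f r with hu0
  set u' := deriv (deriv f) r with hu'0
  have hD : HasDerivAt (fun x => 4 * x ^ 2 + (deriv f x) ^ 2)
      (8 * r + 2 * u * u') r := by
    have := ((hasDerivAt_pow 2 r).const_mul 4).add
      ((hasDerivAt_pow 2 u).comp r hu)
    refine this.congr_deriv ?_
    push_cast; ring
  have hDpos : 0 < 4 * r ^ 2 + u ^ 2 := by positivity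
  set D := 4 * r ^ 2 + u ^ 2 with hDdef
  have hsq : 0 < Real.sqrt D := Real.sqrt_pos.mpr hDpos
  have hS : HasDerivAt (fun x => Real.sqrt (4 * x ^ 2 + (deriv f x) ^ 2))
      (1 / (2 * Real.sqrt D) * (8 * r + 2 * u * u')) r :=
    (Real.hasDerivAt_sqrt hDpos.ne').comp r hD
  have hmain : HasDerivAt (fun x => x ^ 2 / Real.sqrt (4 * x ^ 2 + (deriv f x) ^ 2) + q * x ^ 2 / 4)
      (((↑2 * r ^ 1) * Real.sqrt D - r ^ 2 * (1 / (2 * Real.sqrt D) * (8 * r + 2 * u * u'))) /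
          (Real.sqrt D) ^ 2 + q * (↑2 * r ^ 1) / 4) r :=
    ((hasDerivAt_pow 2 r).div hS hsq.ne').add
      (((hasDerivAt_pow 2 r).const_mul q).div_const 4)
  convert hmain using 1
  have h32 : D ^ ((3 : ℝ) / 2) = D * Real.sqrt D := by
    rw [Real.sqrt_eq_rpow, ← Real.rpow_one_add' hDpos.le (by norm_num)]
    norm_num
  rw [h32]
  set s := Real.sqrt D with hsdef
  have hs2 : s ^ 2 = D := Real.sq_sqrt hDpos.le
  have hs0 : s ≠ 0 := hsq.ne'
  have hD0 : D ≠ 0 := hDpos.ne'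
  field_simp
  linear_combination (-(8 * r * u * u' + 32 * r ^ 2)) * (hs2.trans hDdef)

/-- First integral of the constant symplectic distortion equation for surfaces
of revolution `t = f(√(x²+y²))` in the Heisenberg group. -/
theorem constant_symplectic_distortion_revolution
    (q : ℝ) (a b : ℝ) (ha : 0 ≤ a) (f : ℝ → ℝ)
    (hf : ContDiffOn ℝ 2 f (Set.Ioo a b)) :
    (∀ r ∈ Set.Ioo a b,
        (r * (8 * r + 2 * deriv f r * deriv (deriv f) r) -
            4 * (4 * r ^ 2 + (deriv f r) ^ 2)) /
          (4 * r ^ 2 + (deriv f r) ^ 2) ^ ((3 : ℝ) / 2) = q) ↔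
      ∃ c : ℝ, ∀ r ∈ Set.Ioo a b,
        r ^ 2 / Real.sqrt (4 * r ^ 2 + (deriv f r) ^ 2) = c - q * r ^ 2 / 4 := by
  set g : ℝ → ℝ := fun x => x ^ 2 / Real.sqrt (4 * x ^ 2 + (deriv f x) ^ 2) + q * x ^ 2 / 4
    with hg
  constructor
  · intro h
    rcases Set.eq_empty_or_nonempty (Set.Ioo a b) with he | ⟨x₀, hx₀⟩
    · exact ⟨0, fun r hr => absurd (he ▸ hr) (Set.notMem_empty r)⟩
    refine ⟨g x₀, fun r hr => ?_⟩
    have hconst : ∀ x ∈ Set.Ioo a b, HasDerivAt g 0 x := by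
      intro x hx
      have := key_deriv q a b ha f hf x hx
      rw [h x hx] at this
      convert this using 1
      ring
    have hdiff : DifferentiableOn ℝ g (Set.Ioo a b) := fun x hx =>
      (hconst x hx).differentiableAt.differentiableWithinAt
    have hgr : g r = g x₀ := by
      apply (convex_Ioo a b).is_const_of_fderivWithin_eq_zero hdiff _ hr hx₀
      intro x hx
      rw [((hconst x hx).hasFDerivAt.hasFDerivWithinAt).fderivWithin
        (isOpen_Ioo.uniqueDiffOn x hx)]
      ext
      simp
    have : r ^ 2 / Real.sqrt (4 * r ^ 2 + (deriv f r) ^ 2) + q * r ^ 2 / 4 = g x₀ := hgr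
    linarith
  · rintro ⟨c, h⟩ r hr
    have hr0 : 0 < r := lt_of_le_of_lt ha hr.1
    have hzero : HasDerivAt g 0 r := by
      refine (hasDerivAt_const r c).congr_of_eventuallyEq ?_
      filter_upwards [isOpen_Ioo.mem_nhds hr] with x hx
      have := h x hx
      simp only [hg]
      linarith
    have heq := (key_deriv q a b ha f hf r hr).unique hzero
    set E := (r * (8 * r + 2 * deriv f r * deriv (deriv f) r) -
        4 * (4 * r ^ 2 + (deriv f r) ^ 2)) /
      (4 * r ^ 2 + (deriv f r) ^ 2) ^ ((3 : ℝ) / 2) with hE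
    have h5 : (r / 2) * (q - E) = 0 := by linarith [heq]
    rcases mul_eq_zero.mp h5 with h6 | h6
    · exact absurd h6 (by positivity)
    · linarith
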